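/- For every integer n ≥ 1, the number of little Schröder paths of length 2n equals the sum over k ≥ 0 of (1/n)·C(n,k)·C(n,k+1)·2^k, where C denotes the binomial coefficient. -/

import Mathlib

/-- A step of a Schröder path: upstep, downstep, or a *double* horizontal step. -/
inductive SchStep : Type
  | up : SchStep
  | down : SchStep
  | horiz : SchStep
deriving DecidableEq

/-- The number of unit steps a step occupies: `horiz` is a double horizontal step. -/
def SchStep.len : SchStep → ℕ
  | .up => 1
  | .down => 1
  | .horiz => 2

/-- The change in height produced by a step. -/
def SchStep.rise : SchStep → ℤ
  | .up => 1
  | .down => -1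
  | .horiz => 0

/-- The length of a path (a double horizontal step counts 2). -/
def pathLen (p : List SchStep) : ℕ := (p.map SchStep.len).sum

/-- The final height of a path started at height 0. -/
def pathHeight (p : List SchStep) : ℤ := (p.map SchStep.rise).sum

/-- A big Schröder path: ends at height 0 and never goes below the x-axis. -/
def IsBigSchroeder (p : List SchStep) : Prop :=
  pathHeight p = 0 ∧ ∀ q : List SchStep, q <+: p → 0 ≤ pathHeight q

/-- A little Schröder path: a big Schröder path with no double horizontal step at
height 0. -/
def IsLittleSchroeder (p : List SchStep) : Prop :=
  IsBigSchroeder p ∧ ∀ q r : List SchStep, p = q ++ SchStep.horiz :: r → pathHeight q ≠ 0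


open SchStep List

instance : Finite SchStep :=
  Finite.of_injective (fun s => match s with | .up => (0 : Fin 3) | .down => 1 | .horiz => 2)
    (by intro a b h; cases a <;> cases b <;> simp_all)

@[simp] lemma pathHeight_nil : pathHeight ([] : List SchStep) = 0 := rfl
@[simp] lemma pathLen_nil : pathLen ([] : List SchStep) = 0 := rfl
@[simp] lemma pathHeight_cons (s : SchStep) (p : List SchStep) :
    pathHeight (s :: p) = s.rise + pathHeight p := by simp [pathHeight]
@[simp] lemma pathLen_cons (s : SchStep) (p : List SchStep) :
    pathLen (s :: p) = s.len + pathLen p := by simp [pathLen]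
@[simp] lemma pathHeight_append (p q : List SchStep) :
    pathHeight (p ++ q) = pathHeight p + pathHeight q := by simp [pathHeight]
@[simp] lemma pathLen_append (p q : List SchStep) :
    pathLen (p ++ q) = pathLen p + pathLen q := by simp [pathLen]

@[simp] lemma rise_up : SchStep.up.rise = 1 := rfl
@[simp] lemma rise_down : SchStep.down.rise = -1 := rfl
@[simp] lemma rise_horiz : SchStep.horiz.rise = 0 := rfl
@[simp] lemma len_up : SchStep.up.len = 1 := rfl
@[simp] lemma len_down : SchStep.down.len = 1 := rfl
@[simp] lemma len_horiz : SchStep.horiz.len = 2 := rfl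

lemma length_le_pathLen (p : List SchStep) : p.length ≤ pathLen p := by
  induction p with
  | nil => simp
  | cons s t ih =>
    have : 1 ≤ s.len := by cases s <;> simp [SchStep.len]
    simp only [pathLen_cons, List.length_cons]
    omega

lemma pathLen_eq_zero {p : List SchStep} (h : pathLen p = 0) : p = [] := by
  cases p with
  | nil => rfl
  | cons s t =>
    exfalso
    have : 1 ≤ s.len := by cases s <;> simp [SchStep.len]
    simp only [pathLen_cons] at h
    omega

lemma even_sub_height (p : List SchStep) : Even ((pathLen p : ℤ) - pathHeight p) := by
  induction p with
  | nil => simp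
  | cons s t ih =>
    simp only [pathLen_cons, pathHeight_cons, Nat.cast_add]
    have h2 : Even ((s.len : ℤ) - s.rise) := by
      cases s <;> simp [SchStep.len, SchStep.rise] <;> decide
    have h4 : ((s.len:ℤ) + pathLen t) - (s.rise + pathHeight t)
        = ((s.len:ℤ) - s.rise) + ((pathLen t : ℤ) - pathHeight t) := by ring
    rw [h4]
    exact h2.add ih

lemma even_pathLen_of_big {p : List SchStep} (h : IsBigSchroeder p) : ∃ a, pathLen p = 2 * a := by
  have h1 := even_sub_height p
  rw [h.1, sub_zero] at h1
  obtain ⟨r, hr⟩ := h1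
  exact ⟨r.toNat, by omega⟩

lemma prefix_append_left {α : Type*} (l : List α) {u w : List α} (h : u <+: w) :
    l ++ u <+: l ++ w := by
  obtain ⟨z, hz⟩ := h
  exact ⟨z, by rw [List.append_assoc, hz]⟩

lemma prefix_append_cases {α : Type*} {w q l : List α} (h : w <+: q ++ l) :
    w <+: q ∨ ∃ v, w = q ++ v ∧ v <+: l := by
  obtain ⟨z, hz⟩ := h
  rcases List.append_eq_append_iff.mp hz with ⟨a', h1, h2⟩ | ⟨c', h1, h2⟩
  · exact Or.inl ⟨a', h1.symm⟩
  · exact Or.inr ⟨c', h1, ⟨z, h2.symm⟩⟩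

lemma isBig_nil : IsBigSchroeder ([] : List SchStep) := by
  refine ⟨rfl, fun q hq => ?_⟩
  rw [List.prefix_nil.mp hq]; simp

lemma isLittle_nil : IsLittleSchroeder ([] : List SchStep) := by
  refine ⟨isBig_nil, fun q r h => ?_⟩
  exact absurd h (by simp)

lemma isBig_horiz_cons {t : List SchStep} (h : IsBigSchroeder t) :
    IsBigSchroeder (SchStep.horiz :: t) := by
  constructor
  · simp [h.1, SchStep.rise]
  · intro q hq
    rcases q with _ | ⟨s, q'⟩
    · simp
    · rw [List.cons_prefix_cons] at hq
      obtain ⟨rfl, hq'⟩ := hq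
      simpa [SchStep.rise] using h.2 q' hq'

lemma isBig_of_horiz_cons {t : List SchStep} (h : IsBigSchroeder (SchStep.horiz :: t)) :
    IsBigSchroeder t := by
  constructor
  · have := h.1; simpa [SchStep.rise] using this
  · intro q hq
    have := h.2 (SchStep.horiz :: q) (by rw [List.cons_prefix_cons]; exact ⟨rfl, hq⟩)
    simpa [SchStep.rise] using this

lemma isBig_up_append {q r : List SchStep} (hq : IsBigSchroeder q) (hr : IsBigSchroeder r) :
    IsBigSchroeder (SchStep.up :: q ++ SchStep.down :: r) := by
  constructor
  · simp [hq.1, hr.1, SchStep.rise]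
  · intro w hw
    rcases w with _ | ⟨s, w'⟩
    · simp
    · rw [show (SchStep.up :: q ++ SchStep.down :: r) = SchStep.up :: (q ++ SchStep.down :: r)
        from rfl, List.cons_prefix_cons] at hw
      obtain ⟨rfl, hw'⟩ := hw
      simp only [pathHeight_cons, SchStep.rise]
      rcases prefix_append_cases hw' with h1 | ⟨v, rfl, hv⟩
      · have := hq.2 w' h1; omega
      · rcases v with _ | ⟨s', v'⟩
        · simp only [pathHeight_append, hq.1]; simp
        · rw [List.cons_prefix_cons] at hv
          obtain ⟨rfl, hv'⟩ := hv
          have := hr.2 v' hv'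
          simp only [pathHeight_append, hq.1, pathHeight_cons, SchStep.rise]
          omega

lemma first_return {t : List SchStep} (h : IsBigSchroeder (SchStep.up :: t)) :
    ∃ q r, t = q ++ SchStep.down :: r ∧ IsBigSchroeder q ∧ IsBigSchroeder r := by
  have hex : ∃ i, pathHeight (SchStep.up :: t.take i) = 0 ∧ i ≤ t.length := by
    exact ⟨t.length, by simpa using h.1, le_refl _⟩
  classical
  let i₀ := Nat.find hex
  obtain ⟨hP, hle⟩ : pathHeight (SchStep.up :: t.take i₀) = 0 ∧ i₀ ≤ t.length := Nat.find_spec hex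
  have hmin : ∀ j < i₀, pathHeight (SchStep.up :: t.take j) ≠ 0 := by
    intro j hj
    have := Nat.find_min hex hj
    intro hcontra
    exact this ⟨hcontra, le_trans (le_of_lt (lt_of_lt_of_le hj hle)) (le_refl _)⟩
  have hpos : ∀ j ≤ t.length, 0 ≤ pathHeight (SchStep.up :: t.take j) := by
    intro j _
    exact h.2 _ (by rw [List.cons_prefix_cons]; exact ⟨rfl, t.take_prefix j⟩)
  have hne : i₀ ≠ 0 := by
    intro h0
    have := hP
    rw [h0] at this
    simp at this
  obtain ⟨j, hj⟩ : ∃ j, i₀ = j + 1 := ⟨i₀ - 1, by omega⟩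
  have hjlen : j < t.length := by omega
  set q := t.take j with hqdef
  set r := t.drop (j+1) with hrdef
  have htake : t.take (j+1) = q ++ [t[j]] := by
    rw [List.take_succ, List.getElem?_eq_getElem hjlen]
    rfl
  have hsplit : t = q ++ t[j] :: r := by
    conv_lhs => rw [← List.take_append_drop j t]
    rw [hrdef, List.drop_eq_getElem_cons hjlen]
  -- height of up :: q is ≥ 1
  have hhq0 : 0 ≤ pathHeight (SchStep.up :: q) := hpos j (by omega)
  have hhqne : pathHeight (SchStep.up :: q) ≠ 0 := hmin j (by omega)
  have hP' : pathHeight (SchStep.up :: (q ++ [t[j]])) = 0 := by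
    rw [← htake, ← hj]; exact hP
  have hhq : 1 + pathHeight q + (t[j]).rise = 0 := by
    simp only [pathHeight_cons, pathHeight_append, pathHeight_nil, rise_up] at hP'
    omega
  have hrise_bound : (t[j]).rise = 1 ∨ (t[j]).rise = -1 ∨ (t[j]).rise = 0 := by
    cases hj2 : t[j] <;> simp
  have hq1 : pathHeight q = 0 := by
    simp only [pathHeight_cons, rise_up] at hhq0 hhqne
    omega
  have hdown : t[j] = SchStep.down := by
    have h5 : (t[j]).rise = -1 := by omega
    cases hj2 : t[j] <;> rw [hj2] at h5 <;> first | rfl | simp at h5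
  rw [hdown] at hsplit
  refine ⟨q, r, hsplit, ⟨hq1, ?_⟩, ⟨?_, ?_⟩⟩
  · -- prefixes of q
    intro u hu
    obtain ⟨i, rfl⟩ : ∃ i, u = q.take i := ⟨u.length, (List.prefix_iff_eq_take.mp hu)⟩
    have hqi : q.take i = t.take (min i j) := by
      rw [hqdef, List.take_take]
    rcases eq_or_lt_of_le (min_le_right i j) with he | hlt
    · rw [hqi, he, ← hqdef, hq1]
    · have h1 := hpos (min i j) (by omega)
      have h2 := hmin (min i j) (by omega)
      rw [← hqi] at h1 h2
      simp only [pathHeight_cons, rise_up] at h1 h2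
      omega
  · -- height of r is 0
    have h0 := h.1
    rw [hsplit] at h0
    simp only [pathHeight_cons, pathHeight_append, rise_up, rise_down, hq1] at h0
    omega
  · -- prefixes of r
    intro v hv
    have hpre : (SchStep.up :: (q ++ SchStep.down :: v)) <+: (SchStep.up :: t) := by
      rw [List.cons_prefix_cons]
      refine ⟨rfl, ?_⟩
      rw [hsplit]
      exact prefix_append_left q (by rw [List.cons_prefix_cons]; exact ⟨rfl, hv⟩)
    have := h.2 _ hpre
    simp only [pathHeight_cons, pathHeight_append, rise_up, rise_down, hq1] at this
    omega

lemma decomposition_unique {q r q' r' : List SchStep}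
    (hq : IsBigSchroeder q) (hq' : IsBigSchroeder q')
    (h : q ++ SchStep.down :: r = q' ++ SchStep.down :: r') : q = q' ∧ r = r' := by
  rcases List.append_eq_append_iff.mp h with ⟨a', h1, h2⟩ | ⟨c', h1, h2⟩
  · -- q' = q ++ a' and down :: r = a' ++ down :: r'
    rcases a' with _ | ⟨s, a''⟩
    · simp at h1 h2
      exact ⟨h1.symm, by simpa using h2⟩
    · exfalso
      have hs : s = SchStep.down := by
        have := h2
        rw [List.cons_eq_append_iff] at this
        rcases this with ⟨h3, _⟩ | ⟨l, h3, _⟩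
        · simp at h3
        · simp [List.cons_eq_cons] at h3; tauto
      subst hs
      have hpre : (q ++ [SchStep.down]) <+: q' := by
        rw [h1]
        exact prefix_append_left q ⟨a'', rfl⟩
      have := hq'.2 _ hpre
      simp [hq.1] at this
  · -- q = q' ++ c' and down :: r' = c' ++ down :: r
    rcases c' with _ | ⟨s, c''⟩
    · simp at h1 h2
      exact ⟨h1, (by simpa using h2 : r' = r).symm⟩
    · exfalso
      have hs : s = SchStep.down := by
        rw [List.cons_eq_append_iff] at h2
        rcases h2 with ⟨h3, _⟩ | ⟨l, h3, _⟩
        · simp at h3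
        · simp [List.cons_eq_cons] at h3; tauto
      subst hs
      have hpre : (q' ++ [SchStep.down]) <+: q := by
        rw [h1]
        exact prefix_append_left q' ⟨c'', rfl⟩
      have := hq.2 _ hpre
      simp [hq'.1] at this

lemma isLittle_up_append {q r : List SchStep} (hq : IsBigSchroeder q) (hr : IsLittleSchroeder r) :
    IsLittleSchroeder (SchStep.up :: q ++ SchStep.down :: r) := by
  refine ⟨isBig_up_append hq hr.1, ?_⟩
  intro w z hw
  rcases w with _ | ⟨s, w'⟩
  · simp [List.cons_eq_cons] at hw
  · simp only [List.cons_append] at hw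
    rw [List.cons_eq_cons] at hw
    obtain ⟨rfl, hw'⟩ := hw
    rcases List.append_eq_append_iff.mp hw' with ⟨a', h1, h2⟩ | ⟨c', h1, h2⟩
    · -- w' extends q : w' contains all of q
      rcases a' with _ | ⟨s', a''⟩
      · simp at h2
      · have hs : s' = SchStep.down := by
          rw [List.cons_eq_append_iff] at h2
          rcases h2 with ⟨h3, _⟩ | ⟨l, h3, _⟩
          · simp at h3
          · simp [List.cons_eq_cons] at h3; tauto
        subst hs
        have h4 : r = a'' ++ SchStep.horiz :: z := by
          simp only [List.cons_append] at h2
          rw [List.cons_eq_cons] at h2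
          exact h2.2
        have := hr.2 _ _ h4
        rw [h1]
        simp only [pathHeight_cons, pathHeight_append, rise_up, rise_down, hq.1]
        omega
    · -- q = w' ++ c', horiz :: z = c' ++ down :: r
      rcases c' with _ | ⟨s', c''⟩
      · simp at h2
      · have hs : s' = SchStep.horiz := by
          simp only [List.cons_append] at h2
          rw [List.cons_eq_cons] at h2
          exact h2.1.symm
        subst hs
        have hpre : w' <+: q := by rw [h1]; exact ⟨SchStep.horiz :: c'', rfl⟩
        have := hq.2 _ hpre
        simp only [pathHeight_cons, rise_up]
        omega

lemma isLittle_tail {q r : List SchStep} (hq : IsBigSchroeder q) (hbigr : IsBigSchroeder r)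
    (h : IsLittleSchroeder (SchStep.up :: q ++ SchStep.down :: r)) :
    IsLittleSchroeder r := by
  refine ⟨hbigr, ?_⟩
  intro v z hv
  have heq : SchStep.up :: q ++ SchStep.down :: r
      = (SchStep.up :: q ++ SchStep.down :: v) ++ SchStep.horiz :: z := by
    rw [hv]; simp
  have := h.2 _ _ heq
  simp only [pathHeight_cons, pathHeight_append, rise_up, rise_down, hq.1] at this
  intro hcon
  exact this (by omega)

lemma not_little_horiz {t : List SchStep} (h : IsLittleSchroeder (SchStep.horiz :: t)) : False := by
  have := h.2 [] t rfl
  simp at this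

lemma not_big_down {t : List SchStep} (h : IsBigSchroeder (SchStep.down :: t)) : False := by
  have := h.2 [SchStep.down] ⟨t, rfl⟩
  simp at this

abbrev BigSet (n : ℕ) : Type := {p : List SchStep // IsBigSchroeder p ∧ pathLen p = 2 * n}
abbrev LitSet (n : ℕ) : Type := {p : List SchStep // IsLittleSchroeder p ∧ pathLen p = 2 * n}

instance BigSet.finite (n : ℕ) : Finite (BigSet n) := by
  have h : {p : List SchStep | IsBigSchroeder p ∧ pathLen p = 2 * n}.Finite := by
    apply (List.finite_length_le SchStep (2*n)).subset
    intro p hp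
    exact le_trans (length_le_pathLen p) (le_of_eq hp.2)
  exact h.to_subtype

instance LitSet.finite (n : ℕ) : Finite (LitSet n) := by
  have h : {p : List SchStep | IsLittleSchroeder p ∧ pathLen p = 2 * n}.Finite := by
    apply (List.finite_length_le SchStep (2*n)).subset
    intro p hp
    exact le_trans (length_le_pathLen p) (le_of_eq hp.2)
  exact h.to_subtype

lemma card_big_zero : Nat.card (BigSet 0) = 1 := by
  haveI : Nonempty (BigSet 0) := ⟨⟨[], isBig_nil, by simp⟩⟩
  haveI : Subsingleton (BigSet 0) := ⟨by
    rintro ⟨p, _, hp⟩ ⟨q, _, hq⟩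
    have : p = [] := pathLen_eq_zero (by omega)
    have : q = [] := pathLen_eq_zero (by omega)
    subst_vars; rfl⟩
  exact Nat.card_unique

lemma card_lit_zero : Nat.card (LitSet 0) = 1 := by
  haveI : Nonempty (LitSet 0) := ⟨⟨[], isLittle_nil, by simp⟩⟩
  haveI : Subsingleton (LitSet 0) := ⟨by
    rintro ⟨p, _, hp⟩ ⟨q, _, hq⟩
    have : p = [] := pathLen_eq_zero (by omega)
    have : q = [] := pathLen_eq_zero (by omega)
    subst_vars; rfl⟩
  exact Nat.card_unique

def ΦB (n : ℕ) : (BigSet n ⊕ (Σ _a : Fin (n+1), BigSet _a × BigSet (n - _a))) → BigSet (n+1)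
  | Sum.inl ⟨q, hq, hl⟩ => ⟨SchStep.horiz :: q, isBig_horiz_cons hq, by simp [hl]; ring⟩
  | Sum.inr ⟨a, ⟨q, hq, hql⟩, ⟨r, hr, hrl⟩⟩ =>
      ⟨SchStep.up :: q ++ SchStep.down :: r, isBig_up_append hq hr, by
        have := a.isLt; simp [hql, hrl]; omega⟩

lemma ΦB_bij (n : ℕ) : Function.Bijective (ΦB n) := by
  constructor
  · rintro (⟨q, hq, hql⟩ | ⟨a, ⟨q, hq, hql⟩, ⟨r, hr, hrl⟩⟩)
      (⟨q', hq', hql'⟩ | ⟨a', ⟨q', hq', hql'⟩, ⟨r', hr', hrl'⟩⟩) h <;>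
      simp only [ΦB, Subtype.mk.injEq] at h
    · rw [List.cons_eq_cons] at h
      obtain ⟨-, rfl⟩ := h
      rfl
    · simp only [List.cons_append] at h
      rw [List.cons_eq_cons] at h
      exact absurd h.1 (by simp)
    · simp only [List.cons_append] at h
      rw [List.cons_eq_cons] at h
      exact absurd h.1 (by simp)
    · simp only [List.cons_append, List.cons_eq_cons] at h
      obtain ⟨-, h2⟩ := h
      obtain ⟨rfl, rfl⟩ := decomposition_unique hq hq' h2
      have hav : a = a' := Fin.ext (by omega)
      subst hav
      rfl
  · rintro ⟨p, hp, hl⟩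
    cases p with
    | nil => exfalso; simp at hl
    | cons s t =>
      cases s with
      | down => exact absurd hp (by intro h; exact not_big_down h)
      | horiz =>
        refine ⟨Sum.inl ⟨t, isBig_of_horiz_cons hp, by simp at hl; omega⟩, ?_⟩
        simp only [ΦB]
      | up =>
        obtain ⟨q, r, ht, hq, hr⟩ := first_return hp
        obtain ⟨a, hqa⟩ := even_pathLen_of_big hq
        subst ht
        have hlen : 1 + (pathLen q + (1 + pathLen r)) = 2 * (n+1) := by
          simpa using hl
        have ha : a ≤ n := by omega
        refine ⟨Sum.inr ⟨⟨a, by omega⟩, ⟨q, hq, show pathLen q = 2 * ((⟨a, by omega⟩ : Fin (n+1)) : ℕ) from hqa⟩,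
          ⟨r, hr, show pathLen r = 2 * (n - ((⟨a, by omega⟩ : Fin (n+1)) : ℕ)) from by
            show pathLen r = 2 * (n - a); omega⟩⟩, ?_⟩
        simp only [ΦB]
        rfl

def ΦL (n : ℕ) : (Σ _a : Fin (n+1), BigSet _a × LitSet (n - _a)) → LitSet (n+1)
  | ⟨a, ⟨q, hq, hql⟩, ⟨r, hr, hrl⟩⟩ =>
      ⟨SchStep.up :: q ++ SchStep.down :: r, isLittle_up_append hq hr, by
        have := a.isLt; simp [hql, hrl]; omega⟩

lemma ΦL_bij (n : ℕ) : Function.Bijective (ΦL n) := by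
  constructor
  · rintro ⟨a, ⟨q, hq, hql⟩, ⟨r, hr, hrl⟩⟩ ⟨a', ⟨q', hq', hql'⟩, ⟨r', hr', hrl'⟩⟩ h
    simp only [ΦL, Subtype.mk.injEq] at h
    simp only [List.cons_append, List.cons_eq_cons] at h
    obtain ⟨-, h2⟩ := h
    obtain ⟨rfl, rfl⟩ := decomposition_unique hq hq' h2
    have hav : a = a' := Fin.ext (by omega)
    subst hav
    rfl
  · rintro ⟨p, hp, hl⟩
    cases p with
    | nil => exfalso; simp at hl
    | cons s t =>
      cases s with
      | down => exact absurd hp.1 (by intro h; exact not_big_down h)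
      | horiz => exact absurd hp (by intro h; exact not_little_horiz h)
      | up =>
        obtain ⟨q, r, ht, hq, hr⟩ := first_return hp.1
        obtain ⟨a, hqa⟩ := even_pathLen_of_big hq
        subst ht
        have hlit : IsLittleSchroeder r := isLittle_tail hq hr (by
          have : SchStep.up :: (q ++ SchStep.down :: r) = SchStep.up :: q ++ SchStep.down :: r := rfl
          rw [← this]; exact hp)
        have hlen : 1 + (pathLen q + (1 + pathLen r)) = 2 * (n+1) := by
          simpa using hl
        have ha : a ≤ n := by omega
        refine ⟨⟨⟨a, by omega⟩, ⟨q, hq, show pathLen q = 2 * ((⟨a, by omega⟩ : Fin (n+1)) : ℕ) from hqa⟩,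
          ⟨r, hlit, show pathLen r = 2 * (n - ((⟨a, by omega⟩ : Fin (n+1)) : ℕ)) from by
            show pathLen r = 2 * (n - a); omega⟩⟩, ?_⟩
        simp only [ΦL]
        rfl

lemma card_big_succ (n : ℕ) :
    Nat.card (BigSet (n+1)) = Nat.card (BigSet n)
      + ∑ a ∈ Finset.range (n+1), Nat.card (BigSet a) * Nat.card (BigSet (n - a)) := by
  rw [← Nat.card_congr (Equiv.ofBijective _ (ΦB_bij n))]
  rw [Nat.card_sum]
  congr 1
  letI : ∀ m : ℕ, Fintype (BigSet m) := fun m => Fintype.ofFinite _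
  rw [Nat.card_eq_fintype_card, Fintype.card_sigma]
  rw [← Fin.sum_univ_eq_sum_range (fun a => Nat.card (BigSet a) * Nat.card (BigSet (n - a)))]
  congr 1
  funext a
  rw [Fintype.card_prod, Nat.card_eq_fintype_card, Nat.card_eq_fintype_card]

lemma card_lit_succ (n : ℕ) :
    Nat.card (LitSet (n+1))
      = ∑ a ∈ Finset.range (n+1), Nat.card (BigSet a) * Nat.card (LitSet (n - a)) := by
  rw [← Nat.card_congr (Equiv.ofBijective _ (ΦL_bij n))]
  letI : ∀ m : ℕ, Fintype (BigSet m) := fun m => Fintype.ofFinite _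
  letI : ∀ m : ℕ, Fintype (LitSet m) := fun m => Fintype.ofFinite _
  rw [Nat.card_eq_fintype_card, Fintype.card_sigma]
  rw [← Fin.sum_univ_eq_sum_range (fun a => Nat.card (BigSet a) * Nat.card (LitSet (n - a)))]
  congr 1
  funext a
  rw [Fintype.card_prod, Nat.card_eq_fintype_card, Nat.card_eq_fintype_card]


open Finset

noncomputable def fseq (n : ℕ) : ℚ :=
  ∑ k ∈ Finset.range (n + 1), 2 ^ k * (n.choose k) * ((n - 1).choose k) / (k + 1)

lemma chooseA (n k : ℕ) : ((k : ℚ) + 1) * (n.choose (k + 1)) = ((n : ℚ) - k) * (n.choose k) := by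
  rcases le_or_gt (k + 1) n with h | h
  · have := Nat.choose_succ_right_eq n k
    have hk : k ≤ n := Nat.le_of_succ_le h
    have h2 : ((n.choose (k+1) * (k+1) : ℕ) : ℚ) = ((n.choose k * (n - k) : ℕ) : ℚ) := by
      exact_mod_cast congrArg (Nat.cast : ℕ → ℚ) this
    push_cast [Nat.cast_sub hk] at h2
    linarith
  · rcases eq_or_lt_of_le (Nat.lt_succ_iff.mp h) with h' | h'
    · subst h'
      simp [Nat.choose_succ_self]
    · rw [Nat.choose_eq_zero_of_lt h', Nat.choose_eq_zero_of_lt (Nat.lt_succ_of_lt h')]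
      simp

lemma chooseB (r k : ℕ) : ((r : ℚ) + 1) * (r.choose k) = ((k : ℚ) + 1) * ((r + 1).choose (k + 1)) := by
  have := Nat.add_one_mul_choose_eq r k
  have h2 : (((r+1) * r.choose k : ℕ) : ℚ) = (((r+1).choose (k+1) * (k+1) : ℕ) : ℚ) := by
    exact_mod_cast congrArg (Nat.cast : ℕ → ℚ) this
  push_cast at h2
  linarith

lemma chooseD (r k : ℕ) : ((r : ℚ) + 1 - k) * ((r + 1).choose k) = ((r : ℚ) + 1) * (r.choose k) := by
  have hA := chooseA (r + 1) k
  have hB := chooseB r k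
  push_cast at hA
  linarith

/-- The Gosper/Zeilberger certificate. -/
noncomputable def Gcert (m j : ℕ) : ℚ :=
  2 ^ j * (3 * ((m+2).choose j : ℚ) * ((m+1).choose j : ℚ)
    - ((m+2).choose j : ℚ) ^ 2 - ((m+2).choose j : ℚ) * ((m+3).choose j : ℚ)
    - ((m+1).choose j : ℚ) ^ 2)

set_option maxHeartbeats 2000000 in
lemma local_id (m k : ℕ) :
    ((m : ℚ) + 4) * (2 ^ k * ((m+3).choose k : ℚ) * ((m+2).choose k : ℚ) / ((k : ℚ) + 1))
      - (6 * (m : ℚ) + 15) * (2 ^ k * ((m+2).choose k : ℚ) * ((m+1).choose k : ℚ) / ((k : ℚ) + 1))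
      + ((m : ℚ) + 1) * (2 ^ k * ((m+1).choose k : ℚ) * (m.choose k : ℚ) / ((k : ℚ) + 1))
      = Gcert m (k + 1) - Gcert m k := by
  have hk1 : ((k : ℚ) + 1) ≠ 0 := by positivity
  have h1 : ((m : ℚ) + 1) ≠ 0 := by positivity
  have h2 : ((m : ℚ) + 2) ≠ 0 := by positivity
  have h3 : ((m : ℚ) + 3) ≠ 0 := by positivity
  -- row-lowering identities, column k
  have d2 := chooseD (m+2) k
  have d1 := chooseD (m+1) k
  have d0 := chooseD m k
  simp only [show m+2+1 = m+3 from by omega, show m+1+1 = m+2 from by omega] at d2 d1 d0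
  push_cast at d2 d1 d0
  -- row-lowering identities, column k+1
  have d2' := chooseD (m+2) (k+1)
  have d1' := chooseD (m+1) (k+1)
  simp only [show m+2+1 = m+3 from by omega, show m+1+1 = m+2 from by omega] at d2' d1'
  push_cast at d2' d1'
  -- column relation in the top row
  have a3 := chooseA (m+3) k
  push_cast at a3
  have e0k : ((m.choose k : ℕ) : ℚ) = ((m:ℚ)+1-k) * ((m+1).choose k : ℚ) / ((m:ℚ)+1) := by
    rw [eq_div_iff h1]; linarith
  have e1k : (((m+1).choose k : ℕ) : ℚ) = ((m:ℚ)+2-k) * ((m+2).choose k : ℚ) / ((m:ℚ)+2) := by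
    rw [eq_div_iff h2]; linarith
  have e2k : (((m+2).choose k : ℕ) : ℚ) = ((m:ℚ)+3-k) * ((m+3).choose k : ℚ) / ((m:ℚ)+3) := by
    rw [eq_div_iff h3]; linarith
  have e1k1 : (((m+1).choose (k+1) : ℕ) : ℚ)
      = ((m:ℚ)+2-(k+1)) * ((m+2).choose (k+1) : ℚ) / ((m:ℚ)+2) := by
    rw [eq_div_iff h2]; linarith
  have e2k1 : (((m+2).choose (k+1) : ℕ) : ℚ)
      = ((m:ℚ)+3-(k+1)) * ((m+3).choose (k+1) : ℚ) / ((m:ℚ)+3) := by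
    rw [eq_div_iff h3]; linarith
  have e3 : (((m+3).choose (k+1) : ℕ) : ℚ)
      = ((m:ℚ)+3-k) * ((m+3).choose k : ℚ) / ((k:ℚ)+1) := by
    rw [eq_div_iff hk1]; linarith
  rw [Gcert, Gcert, e0k, e1k1, e2k1, e3, e1k, e2k, pow_succ]
  field_simp
  ring

lemma Gcert_zero (m : ℕ) : Gcert m 0 = 0 := by
  simp [Gcert]; ring

lemma Gcert_top (m : ℕ) : Gcert m (m + 4) = 0 := by
  have h1 : (m+1).choose (m+4) = 0 := Nat.choose_eq_zero_of_lt (by omega)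
  have h2 : (m+2).choose (m+4) = 0 := Nat.choose_eq_zero_of_lt (by omega)
  simp [Gcert, h1, h2]

lemma fseq_rec (m : ℕ) :
    ((m : ℚ) + 4) * fseq (m+3) = (6 * (m : ℚ) + 15) * fseq (m+2) - ((m : ℚ) + 1) * fseq (m+1) := by
  have hsum : ∑ k ∈ Finset.range (m+4),
      (((m : ℚ) + 4) * (2 ^ k * ((m+3).choose k : ℚ) * ((m+2).choose k : ℚ) / ((k : ℚ) + 1))
      - (6 * (m : ℚ) + 15) * (2 ^ k * ((m+2).choose k : ℚ) * ((m+1).choose k : ℚ) / ((k : ℚ) + 1))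
      + ((m : ℚ) + 1) * (2 ^ k * ((m+1).choose k : ℚ) * (m.choose k : ℚ) / ((k : ℚ) + 1))) = 0 := by
    rw [Finset.sum_congr rfl (fun k _ => local_id m k), Finset.sum_range_sub (Gcert m),
      Gcert_top, Gcert_zero, sub_zero]
  have e3 : fseq (m+3) = ∑ k ∈ Finset.range (m+4),
      2 ^ k * ((m+3).choose k : ℚ) * ((m+2).choose k : ℚ) / ((k : ℚ) + 1) := by
    rw [fseq]
    simp only [show m+3-1 = m+2 from by omega, show m+3+1 = m+4 from by omega]
  have e2 : fseq (m+2) = ∑ k ∈ Finset.range (m+4),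
      2 ^ k * ((m+2).choose k : ℚ) * ((m+1).choose k : ℚ) / ((k : ℚ) + 1) := by
    rw [fseq]
    simp only [show m+2-1 = m+1 from by omega]
    apply Finset.sum_subset (Finset.range_subset_range.2 (by omega))
    intro x _ hx
    have : (m+2).choose x = 0 := Nat.choose_eq_zero_of_lt (by simp at hx ⊢; omega)
    simp [this]
  have e1 : fseq (m+1) = ∑ k ∈ Finset.range (m+4),
      2 ^ k * ((m+1).choose k : ℚ) * (m.choose k : ℚ) / ((k : ℚ) + 1) := by
    rw [fseq]
    simp only [show m+1-1 = m from by omega]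
    apply Finset.sum_subset (Finset.range_subset_range.2 (by omega))
    intro x _ hx
    have : (m+1).choose x = 0 := Nat.choose_eq_zero_of_lt (by simp at hx ⊢; omega)
    simp [this]
  rw [Finset.sum_add_distrib, Finset.sum_sub_distrib, ← Finset.mul_sum, ← Finset.mul_sum,
    ← Finset.mul_sum, ← e3, ← e2, ← e1] at hsum
  linarith


open PowerSeries

lemma quad_to_rec (c : ℕ → ℚ) (h0 : c 0 = 1)
    (hE : ∀ n : ℕ, c (n+1) + c n = 2 * ∑ a ∈ Finset.range (n+1), c a * c (n - a)) :
    ∀ m : ℕ, ((m : ℚ) + 4) * c (m+3) = (6 * (m : ℚ) + 15) * c (m+2) - ((m : ℚ) + 1) * c (m+1) := by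
  set y : ℚ⟦X⟧ := PowerSeries.mk c with hy
  have hq : 2 * X * y ^ 2 = (1 + X) * y - 1 := by
    ext n
    have h2 : (2 : ℚ⟦X⟧) * X * y ^ 2 = X * (y * y) + X * (y * y) := by ring
    have h3 : (1 + X) * y - 1 = (y + X * y) - 1 := by ring
    rw [h2, h3]
    cases n with
    | zero =>
      simp [coeff_zero_X_mul, hy, h0, coeff_zero_eq_constantCoeff]
    | succ n =>
      rw [map_add, map_sub, map_add, coeff_succ_X_mul, coeff_succ_X_mul, coeff_mul]
      rw [Finset.Nat.sum_antidiagonal_eq_sum_range_succ_mk]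
      simp only [hy, coeff_mk, coeff_one, Nat.succ_ne_zero, if_false, sub_zero]
      have := hE n
      push_cast at this ⊢
      linarith [this]
  set D := PowerSeries.derivative (R := ℚ) with hD
  have hDX : D X = 1 := PowerSeries.derivative_X
  have hq' : X * (y * y) + X * (y * y) = y + X * y - 1 := by linear_combination hq
  have hW := congrArg D hq'
  rw [map_add, map_sub, map_add, Derivation.leibniz, Derivation.leibniz,
    Derivation.leibniz, hDX, Derivation.map_one_eq_zero] at hW
  simp only [smul_eq_mul, mul_one, sub_zero] at hW
  have hlin : X * (1 - 6 * X + X ^ 2) * D y = (3 * X - 1) * y + (1 - X) := by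
    have hQ : 2 * X * y ^ 2 - (1 + X) * y + 1 = 0 := by linear_combination hq
    have hW' : 2 * y ^ 2 + 4 * X * y * D y - y - (1 + X) * D y = 0 := by
      linear_combination hW
    linear_combination (X * (4 * X * y - 1 - X)) * hW' - (8 * X ^ 2 * D y + 4 * X * y - X + 1) * hQ
  intro m
  have hDy : ∀ j : ℕ, coeff j (D y) = ((j : ℚ) + 1) * c (j + 1) := by
    intro j
    rw [hD, PowerSeries.coeff_derivative, hy, coeff_mk]
    push_cast; ring
  have A1 : coeff (m+3) (X * D y) = ((m : ℚ) + 3) * c (m+3) := by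
    rw [show (m+3) = (m+2)+1 from rfl, coeff_succ_X_mul, hDy]
    push_cast; ring
  have A2 : coeff (m+3) (X ^ 2 * D y) = ((m : ℚ) + 2) * c (m+2) := by
    have h := coeff_X_pow_mul (D y) 2 (m+1)
    rw [show (m+1)+2 = m+3 from by omega] at h
    rw [h, hDy]; try push_cast; try ring
  have A3 : coeff (m+3) (X ^ 3 * D y) = ((m : ℚ) + 1) * c (m+1) := by
    have h := coeff_X_pow_mul (D y) 3 m
    rw [h, hDy]; try push_cast; try ring
  have A4 : coeff (m+3) (X * y) = c (m+2) := by
    rw [show (m+3) = (m+2)+1 from rfl, coeff_succ_X_mul, hy, coeff_mk]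
  have A5 : coeff (m+3) y = c (m+3) := by rw [hy, coeff_mk]
  have A6 : coeff (m+3) (1 : ℚ⟦X⟧) = 0 := by
    rw [coeff_one]; simp
  have A7 : coeff (m+3) (X : ℚ⟦X⟧) = 0 := by
    rw [coeff_X]; simp
  have hexp : X * (1 - 6 * X + X ^ 2) * D y
      = X * D y - C 6 * (X ^ 2 * D y) + X ^ 3 * D y := by
    rw [map_ofNat]; ring
  have hexp2 : (3 * X - 1) * y + (1 - X) = C 3 * (X * y) - y + (1 - X) := by
    rw [map_ofNat]; ring
  have hco := congrArg (PowerSeries.coeff (m + 3)) hlin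
  rw [hexp, hexp2, map_add, map_sub, map_add, map_sub, map_sub, coeff_C_mul, coeff_C_mul,
    A1, A2, A3, A4, A5, A6, A7] at hco
  linarith



lemma big_two_lit : ∀ n : ℕ, Nat.card (BigSet (n+1)) = 2 * Nat.card (LitSet (n+1)) := by
  intro n
  induction n using Nat.strong_induction_on with
  | _ n ih =>
    rw [card_big_succ, card_lit_succ, Finset.mul_sum]
    rw [Finset.sum_range_succ, Finset.sum_range_succ]
    have hcongr : ∀ a ∈ Finset.range n,
        Nat.card (BigSet a) * Nat.card (BigSet (n - a))
          = 2 * (Nat.card (BigSet a) * Nat.card (LitSet (n - a))) := by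
      intro a ha
      simp only [Finset.mem_range] at ha
      obtain ⟨m', hm'⟩ : ∃ m', n - a = m' + 1 := ⟨n - a - 1, by omega⟩
      rw [hm', ih m' (by omega)]
      ring
    rw [Finset.sum_congr rfl hcongr, ← Finset.mul_sum]
    simp only [Nat.sub_self, card_big_zero, card_lit_zero]
    ring

/-- the little Schröder counting sequence, in `ℚ`. -/
noncomputable def cq (n : ℕ) : ℚ := (Nat.card (LitSet n) : ℚ)

lemma cq_zero : cq 0 = 1 := by simp [cq, card_lit_zero]

lemma cq_E (n : ℕ) : cq (n+1) + cq n = 2 * ∑ a ∈ Finset.range (n+1), cq a * cq (n - a) := by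
  have h1 := card_lit_succ n
  have h2 : ∀ a ∈ Finset.range n,
      (Nat.card (BigSet (a+1)) : ℚ) * (Nat.card (LitSet (n - (a+1))) : ℚ)
        = 2 * (cq (a+1) * cq (n - (a+1))) := by
    intro a _
    rw [big_two_lit a]
    push_cast [cq]
    ring
  have h3 : (cq (n+1) : ℚ) = ∑ a ∈ Finset.range (n+1),
      (Nat.card (BigSet a) : ℚ) * (Nat.card (LitSet (n - a)) : ℚ) := by
    rw [cq, h1]; push_cast; rfl
  rw [Finset.sum_range_succ' _ n] at h3
  rw [Finset.sum_congr rfl h2] at h3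
  have h4 : ∑ a ∈ Finset.range (n+1), cq a * cq (n - a)
      = (∑ a ∈ Finset.range n, cq (a+1) * cq (n - (a+1))) + cq 0 * cq (n - 0) := by
    rw [Finset.sum_range_succ' _ n]
  rw [h4, cq_zero]
  simp only [Nat.sub_zero, card_big_zero, Nat.cast_one, one_mul] at h3
  rw [← Finset.mul_sum] at h3
  rw [h3]
  simp only [Nat.sub_zero, cq]
  ring

lemma cq_one : cq 1 = 1 := by
  have := cq_E 0
  simp [Finset.sum_range_succ, cq_zero] at this
  linarith

lemma cq_two : cq 2 = 3 := by
  have := cq_E 1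
  simp [Finset.sum_range_succ, cq_zero, cq_one] at this
  linarith

lemma fseq_one : fseq 1 = 1 := by
  norm_num [fseq, Finset.sum_range_succ]

lemma fseq_two : fseq 2 = 3 := by
  norm_num [fseq, Finset.sum_range_succ]

lemma cq_eq_fseq : ∀ n : ℕ, cq (n+1) = fseq (n+1) ∧ cq (n+2) = fseq (n+2) := by
  intro n
  induction n with
  | zero => exact ⟨by rw [cq_one, fseq_one], by rw [cq_two, fseq_two]⟩
  | succ m ih =>
    refine ⟨ih.2, ?_⟩
    have hc := quad_to_rec cq cq_zero cq_E m
    have hf := fseq_rec m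
    have hne : ((m : ℚ) + 4) ≠ 0 := by positivity
    have : ((m : ℚ) + 4) * cq (m+3) = ((m : ℚ) + 4) * fseq (m+3) := by
      rw [hc, hf, ih.1, ih.2]
    exact mul_left_cancel₀ hne this

lemma term_eq (r k : ℕ) :
    (1 / ((r:ℚ)+1)) * (((r+1).choose k : ℕ) : ℚ) * (((r+1).choose (k+1) : ℕ) : ℚ) * 2^k
      = 2^k * (((r+1).choose k : ℕ) : ℚ) * ((r.choose k : ℕ) : ℚ) / ((k:ℚ)+1) := by
  have hA := chooseA (r+1) k
  push_cast at hA
  have hD := chooseD r k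
  have h1 : ((r:ℚ)+1) ≠ 0 := by positivity
  have h2 : ((k:ℚ)+1) ≠ 0 := by positivity
  field_simp
  linear_combination ((((r+1).choose k : ℕ) : ℚ)) * hA
    + ((((r+1).choose k : ℕ) : ℚ)) * hD

lemma finsum_red (n : ℕ) :
    (∑ᶠ k : ℕ, (1 / (n : ℚ)) * (n.choose k) * (n.choose (k + 1)) * 2 ^ k)
      = ∑ k ∈ Finset.range (n+1), (1 / (n : ℚ)) * (n.choose k) * (n.choose (k + 1)) * 2 ^ k := by
  apply finsum_eq_finset_sum_of_support_subset
  intro k hk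
  simp only [Function.mem_support] at hk
  by_contra hk'
  simp only [Finset.coe_range, Set.mem_Iio, not_lt] at hk'
  have h0 : n.choose (k+1) = 0 := Nat.choose_eq_zero_of_lt (by omega)
  apply hk
  rw [h0]
  simp

/-- The number of little Schröder paths of length `2n` is
`∑_{k ≥ 0} (1/n) C(n,k) C(n,k+1) 2^k`. -/
theorem little_schroeder_count (n : ℕ) (hn : 1 ≤ n) :
    (Nat.card {p : List SchStep // IsLittleSchroeder p ∧ pathLen p = 2 * n} : ℚ) =
      ∑ᶠ k : ℕ, (1 / (n : ℚ)) * (n.choose k) * (n.choose (k + 1)) * 2 ^ k := by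
  obtain ⟨r, rfl⟩ : ∃ r, n = r + 1 := ⟨n - 1, by omega⟩
  rw [finsum_red]
  have h1 : (Nat.card (LitSet (r+1)) : ℚ) = fseq (r+1) := (cq_eq_fseq r).1
  have h2 : fseq (r+1) = ∑ k ∈ Finset.range (r+1+1),
      (1 / (((r+1 : ℕ)) : ℚ)) * (((r+1).choose k : ℕ) : ℚ) * (((r+1).choose (k+1) : ℕ) : ℚ)
        * 2 ^ k := by
    rw [fseq]
    simp only [show r+1-1 = r from by omega]
    refine Finset.sum_congr rfl fun k _ => ?_
    have h3 := term_eq r k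
    push_cast at h3 ⊢
    linarith [h3]
  exact h1.trans (h2.trans (by push_cast; ring_nf))
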